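/- For the fundamental matrix Ω = (I+L)^{-1} of a directed graph, for any pair of distinct nodes i and j it holds that 0 ≤ ω_{ji} < ω_{ii} ≤ 1. -/

import Mathlib

open Matrix Finset

attribute [local instance] Matrix.linftyOpNormedRing Matrix.linftyOpNormedSpace

lemma norm_lt_one_of_rows {n : ℕ} (P : Matrix (Fin n) (Fin n) ℝ) [NeZero n]
    (hPnn : ∀ k l, 0 ≤ P k l) (hProw : ∀ k, ∑ l, P k l < 1) : ‖P‖ < 1 := by
  rw [Matrix.linfty_opNorm_def]
  rw [show (1 : ℝ) = ((1 : NNReal) : ℝ) by norm_num, NNReal.coe_lt_coe]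
  rw [Finset.sup_lt_iff (by norm_num : (⊥ : NNReal) < 1)]
  intro k _
  rw [← NNReal.coe_lt_coe]
  push_cast
  calc (∑ l, (‖P k l‖₊ : ℝ)) = ∑ l, P k l := by
        refine Finset.sum_congr rfl fun l _ => ?_
        rw [coe_nnnorm, Real.norm_eq_abs, abs_of_nonneg (hPnn k l)]
    _ < 1 := hProw k

lemma entry_continuous {n : ℕ} (k l : Fin n) :
    Continuous (fun M : Matrix (Fin n) (Fin n) ℝ => M k l) := by
  refine (LipschitzWith.of_dist_le_mul (K := 1) fun M N => ?_).continuous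
  rw [NNReal.coe_one, one_mul, dist_eq_norm, dist_eq_norm]
  have h1 : |(M - N) k l| ≤ ‖M - N‖ := by
    rw [Matrix.linfty_opNorm_def]
    calc |(M - N) k l| = ((‖(M - N) k l‖₊ : NNReal) : ℝ) := by
          rw [coe_nnnorm, Real.norm_eq_abs]
      _ ≤ ((∑ u, ‖(M - N) k u‖₊ : NNReal) : ℝ) := by
          rw [NNReal.coe_le_coe]
          exact Finset.single_le_sum (f := fun u => ‖(M - N) k u‖₊) (fun u _ => zero_le) (Finset.mem_univ l)
      _ ≤ _ := by
          rw [NNReal.coe_le_coe]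
          exact Finset.le_sup (f := fun i => ∑ u, ‖(M - N) i u‖₊) (Finset.mem_univ k)
  simpa [Matrix.sub_apply, Real.norm_eq_abs] using h1

lemma neumann {n : ℕ} [NeZero n] (P : Matrix (Fin n) (Fin n) ℝ)
    (hPnn : ∀ k l, 0 ≤ P k l) (hProw : ∀ k, ∑ l, P k l < 1) (i : Fin n) :
    IsUnit (1 - P) ∧ (∀ k l, 0 ≤ (1 - P)⁻¹ k l) ∧ 1 ≤ (1 - P)⁻¹ i i ∧
      (∀ j, j ≠ i → (1 - P)⁻¹ j i < (1 - P)⁻¹ i i) := by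
  have hnorm : ‖P‖ < 1 := norm_lt_one_of_rows P hPnn hProw
  letI : CompleteSpace (Matrix (Fin n) (Fin n) ℝ) := FiniteDimensional.complete ℝ _
  have hunit : IsUnit (1 - P) := isUnit_one_sub_of_norm_lt_one hnorm
  have hsum : HasSum (fun m : ℕ => P ^ m) ((1 - P)⁻¹) := by
    rw [Matrix.nonsing_inv_eq_ringInverse]
    exact hasSum_geom_series_inverse P hnorm
  set S := (1 - P)⁻¹ with hS
  have hentry : ∀ k l, HasSum (fun m : ℕ => (P ^ m) k l) (S k l) := by
    intro k l
    let g : Matrix (Fin n) (Fin n) ℝ →+ ℝ :=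
      AddMonoidHom.mk' (fun M => M k l) (fun _ _ => rfl)
    have hg : Continuous g := entry_continuous k l
    exact hsum.map g hg
  have hpow_nn : ∀ (m : ℕ) (k l : Fin n), 0 ≤ (P ^ m) k l := by
    intro m
    induction m with
    | zero => intro k l; rw [pow_zero, Matrix.one_apply]; positivity
    | succ m ih =>
      intro k l
      rw [pow_succ', Matrix.mul_apply]
      exact Finset.sum_nonneg fun u _ => mul_nonneg (hPnn k u) (ih u l)
  have hSnn : ∀ k l, 0 ≤ S k l := fun k l => (hentry k l).nonneg (fun m => hpow_nn m k l)
  -- partial sums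
  have hT_nn : ∀ (N : ℕ) (k l : Fin n), 0 ≤ (∑ m ∈ Finset.range N, P ^ m) k l := by
    intro N k l
    rw [Matrix.sum_apply]
    exact Finset.sum_nonneg fun m _ => hpow_nn m k l
  have key : ∀ (N : ℕ) (l : Fin n),
      (∑ m ∈ Finset.range N, P ^ m) l i ≤ (∑ m ∈ Finset.range N, P ^ m) i i := by
    intro N
    induction N with
    | zero => simp
    | succ N ih =>
      intro l
      rcases eq_or_ne l i with rfl | hl
      · exact le_refl _
      have h1 : (∑ m ∈ Finset.range (N + 1), P ^ m) l i
          = ∑ u, P l u * (∑ m ∈ Finset.range N, P ^ m) u i := by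
        rw [geom_sum_succ, Matrix.add_apply, Matrix.one_apply_ne hl, Matrix.mul_apply, add_zero]
      have h2 : (∑ m ∈ Finset.range N, P ^ m) i i ≤ (∑ m ∈ Finset.range (N + 1), P ^ m) i i := by
        rw [Finset.sum_range_succ, Matrix.add_apply]
        exact le_add_of_nonneg_right (hpow_nn N i i)
      rw [h1]
      calc ∑ u, P l u * (∑ m ∈ Finset.range N, P ^ m) u i
          ≤ ∑ u, P l u * (∑ m ∈ Finset.range N, P ^ m) i i := by
            refine Finset.sum_le_sum fun u _ => mul_le_mul_of_nonneg_left (ih u) (hPnn l u)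
        _ = (∑ u, P l u) * (∑ m ∈ Finset.range N, P ^ m) i i := by
            rw [Finset.sum_mul]
        _ ≤ 1 * (∑ m ∈ Finset.range N, P ^ m) i i := by
            exact mul_le_mul_of_nonneg_right (le_of_lt (hProw l)) (hT_nn N i i)
        _ = (∑ m ∈ Finset.range N, P ^ m) i i := one_mul _
        _ ≤ _ := h2
  have hSle : ∀ l, S l i ≤ S i i := by
    intro l
    rw [← (hentry l i).tsum_eq]
    refine Summable.tsum_le_of_sum_le (hentry l i).summable fun F => ?_
    obtain ⟨N, hN⟩ := F.exists_nat_subset_range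
    calc ∑ m ∈ F, (P ^ m) l i ≤ ∑ m ∈ Finset.range N, (P ^ m) l i :=
          Finset.sum_le_sum_of_subset_of_nonneg hN fun m _ _ => hpow_nn m l i
      _ = (∑ m ∈ Finset.range N, P ^ m) l i := by rw [Matrix.sum_apply]
      _ ≤ (∑ m ∈ Finset.range N, P ^ m) i i := key N l
      _ = ∑ m ∈ Finset.range N, (P ^ m) i i := by rw [Matrix.sum_apply]
      _ ≤ S i i := by
          rw [← (hentry i i).tsum_eq]
          exact Summable.sum_le_tsum _ (fun m _ => hpow_nn m i i) (hentry i i).summable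
  have hSii : 1 ≤ S i i := by
    have := Summable.le_tsum (hentry i i).summable 0 (fun m _ => hpow_nn m i i)
    rw [(hentry i i).tsum_eq] at this
    simpa using this
  refine ⟨hunit, hSnn, hSii, fun j hj => ?_⟩
  have hinv : (1 - P) * S = 1 :=
    Matrix.mul_nonsing_inv _ ((Matrix.isUnit_iff_isUnit_det _).mp hunit)
  have hSeq : S = 1 + P * S := by
    have h0 : S - P * S = 1 := by
      have he : (1 - P) * S = S - P * S := by rw [Matrix.sub_mul, one_mul]
      rw [← he]; exact hinv
    exact (sub_eq_iff_eq_add.mp h0)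
  have hji : S j i = ∑ u, P j u * S u i := by
    conv_lhs => rw [hSeq]
    rw [Matrix.add_apply, Matrix.one_apply_ne hj, Matrix.mul_apply, zero_add]
  rw [hji]
  calc ∑ u, P j u * S u i ≤ ∑ u, P j u * S i i :=
        Finset.sum_le_sum fun u _ => mul_le_mul_of_nonneg_left (hSle u) (hPnn j u)
    _ = (∑ u, P j u) * S i i := by rw [Finset.sum_mul]
    _ < 1 * S i i := by
        exact mul_lt_mul_of_pos_right (hProw j) (lt_of_lt_of_le one_pos hSii)
    _ = S i i := one_mul _

/-- For any pair of distinct nodes i and j, the fundamental matrix Ω = (I+L)⁻¹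
satisfies 0 ≤ ω_{ji} < ω_{ii} ≤ 1. -/
theorem stmt_3 {n : ℕ} (A : Matrix (Fin n) (Fin n) ℝ)
    (hA : ∀ i j, A i j = 0 ∨ A i j = 1) (hdiag : ∀ i, A i i = 0)
    (D : Matrix (Fin n) (Fin n) ℝ) (hD : D = Matrix.diagonal (fun i => ∑ j, A i j))
    (L : Matrix (Fin n) (Fin n) ℝ) (hL : L = D - A)
    (Ω : Matrix (Fin n) (Fin n) ℝ) (hΩ : Ω = (1 + L)⁻¹)
    (i j : Fin n) (hij : i ≠ j) :
    0 ≤ Ω j i ∧ Ω j i < Ω i i ∧ Ω i i ≤ 1 := by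
  haveI : NeZero n := ⟨(Fin.pos i).ne'⟩
  subst hL hD
  set d : Fin n → ℝ := fun k => ∑ l, A k l with hd
  have hA0 : ∀ k l, 0 ≤ A k l := fun k l => by rcases hA k l with h | h <;> rw [h] <;> norm_num
  have hd0 : ∀ k, 0 ≤ d k := fun k => Finset.sum_nonneg fun l _ => hA0 k l
  have hdpos : ∀ k, 0 < 1 + d k := fun k => by linarith [hd0 k]
  set P : Matrix (Fin n) (Fin n) ℝ := Matrix.of (fun k l => A k l / (1 + d k)) with hP
  have hPapp : ∀ k l, P k l = A k l / (1 + d k) := fun k l => rfl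
  have hPnn : ∀ k l, 0 ≤ P k l := fun k l => div_nonneg (hA0 k l) (hdpos k).le
  have hProw : ∀ k, ∑ l, P k l < 1 := by
    intro k
    have h1 : ∑ l, P k l = d k / (1 + d k) := by
      simp only [hPapp, ← Finset.sum_div]
      rfl
    rw [h1, div_lt_one (hdpos k)]
    linarith
  have hfact : (1 : Matrix (Fin n) (Fin n) ℝ) + (Matrix.diagonal d - A)
      = Matrix.diagonal (fun k => 1 + d k) * (1 - P) := by
    ext k l
    rw [Matrix.diagonal_mul, Matrix.add_apply, Matrix.sub_apply, Matrix.sub_apply, hPapp]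
    rcases eq_or_ne k l with rfl | hkl
    · rw [Matrix.one_apply_eq, Matrix.diagonal_apply_eq, hdiag k]
      rw [sub_zero, zero_div, sub_zero, mul_one]
    · rw [Matrix.one_apply_ne hkl, Matrix.diagonal_apply_ne _ hkl]
      rw [zero_add, zero_sub, zero_sub, mul_neg, mul_div_cancel₀ _ (hdpos k).ne']
  obtain ⟨hunit, hSnn, hSii, hSlt⟩ := neumann P hPnn hProw i
  have h1 : (1 - P) * (1 - P)⁻¹ = 1 :=
    Matrix.mul_nonsing_inv _ ((Matrix.isUnit_iff_isUnit_det _).mp hunit)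
  have h2 : Matrix.diagonal (fun k => 1 + d k) * Matrix.diagonal (fun k => (1 + d k)⁻¹) = 1 := by
    rw [Matrix.diagonal_mul_diagonal]
    convert Matrix.diagonal_one with k
    exact mul_inv_cancel₀ (hdpos k).ne'
  have hΩeq : Ω = (1 - P)⁻¹ * Matrix.diagonal (fun k => (1 + d k)⁻¹) := by
    rw [hΩ]
    refine Matrix.inv_eq_right_inv ?_
    rw [hfact, Matrix.mul_assoc, ← Matrix.mul_assoc (1 - P), h1, Matrix.one_mul, h2]
  have hΩapp : ∀ k l, Ω k l = (1 - P)⁻¹ k l * (1 + d l)⁻¹ := by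
    intro k l
    rw [hΩeq, Matrix.mul_diagonal]
  have hΩnn : ∀ k l, 0 ≤ Ω k l := fun k l => by
    rw [hΩapp]
    exact mul_nonneg (hSnn k l) (inv_nonneg.mpr (hdpos l).le)
  have hMunit : IsUnit ((1 : Matrix (Fin n) (Fin n) ℝ) + (Matrix.diagonal d - A)) := by
    rw [hfact]
    refine IsUnit.mul ?_ hunit
    rw [Matrix.isUnit_iff_isUnit_det, Matrix.det_diagonal]
    exact isUnit_iff_ne_zero.mpr (Finset.prod_ne_zero_iff.mpr fun k _ => (hdpos k).ne')
  have hrow : ∑ k, Ω i k = 1 := by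
    have hMul : Ω * ((1 : Matrix (Fin n) (Fin n) ℝ) + (Matrix.diagonal d - A)) = 1 := by
      rw [hΩ]
      exact Matrix.nonsing_inv_mul _ ((Matrix.isUnit_iff_isUnit_det _).mp hMunit)
    have hones : ((1 : Matrix (Fin n) (Fin n) ℝ) + (Matrix.diagonal d - A)) *ᵥ (fun _ => 1)
        = fun _ => 1 := by
      funext k
      simp only [Matrix.mulVec, dotProduct, Matrix.add_apply, Matrix.sub_apply, mul_one]
      rw [Finset.sum_add_distrib, Finset.sum_sub_distrib]
      have e1 : ∑ l, (1 : Matrix (Fin n) (Fin n) ℝ) k l = 1 := by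
        simp [Matrix.one_apply]
      have e2 : ∑ l, Matrix.diagonal d k l = d k := by
        simp [Matrix.diagonal_apply]
      rw [e1, e2]
      simp [hd]
    have key : Ω *ᵥ (fun _ => 1) = fun _ => (1 : ℝ) := by
      calc Ω *ᵥ (fun _ => 1)
          = Ω *ᵥ (((1 : Matrix (Fin n) (Fin n) ℝ) + (Matrix.diagonal d - A)) *ᵥ (fun _ => 1)) := by
            rw [hones]
        _ = (Ω * ((1 : Matrix (Fin n) (Fin n) ℝ) + (Matrix.diagonal d - A))) *ᵥ (fun _ => 1) := by
            rw [Matrix.mulVec_mulVec]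
        _ = fun _ => 1 := by rw [hMul, Matrix.one_mulVec]
    have := congrFun key i
    simpa [Matrix.mulVec, dotProduct] using this
  refine ⟨hΩnn j i, ?_, ?_⟩
  · rw [hΩapp j i, hΩapp i i]
    exact mul_lt_mul_of_pos_right (hSlt j (Ne.symm hij)) (inv_pos.mpr (hdpos i))
  · rw [← hrow]
    exact Finset.single_le_sum (fun k _ => hΩnn i k) (Finset.mem_univ i)
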